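/- Let M be a finitely generated monoid admitting a right I-structure ν based on a set S. Then S is finite, and there exists a unique binary operation ∘ on S such that (S,∘) is an RC-quasigroup and M admits the presentation with generators S and relations s(s∘t) = t(t∘s) for s ≠ t in S (so M is the structure monoid of (S,∘)); moreover the I-structure is unique and is given by ν(s₁⋯sₙ) = Πₙ(s₁,…,sₙ), and for s ≠ t the element s∘t equals the right-complement s∖t in M. -/

import Mathlib

set_option linter.unusedSectionVars false


/-- The right-cyclic law: `(x∘y)∘(x∘z) = (y∘x)∘(y∘z)`. -/
def RCLaw {S : Type*} (op : S → S → S) : Prop :=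
  ∀ x y z : S, op (op x y) (op x z) = op (op y x) (op y z)

/-- The defining relations `s(s∘t) = t(t∘s)`, `s ≠ t`, of the structure monoid, as a relation
on the free monoid over `S`. -/
def rcRel {S : Type*} (op : S → S → S) : FreeMonoid S → FreeMonoid S → Prop :=
  fun a b => ∃ s t : S, s ≠ t ∧
    a = FreeMonoid.of s * FreeMonoid.of (op s t) ∧ b = FreeMonoid.of t * FreeMonoid.of (op t s)

/-- The structure monoid of `(S,∘)`: the monoid presented by generators `S` and relations
`s(s∘t) = t(t∘s)` for `s ≠ t`, realized as the quotient of the free monoid on `S` by the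
congruence generated by these relations. -/
abbrev StructureMonoid {S : Type*} (op : S → S → S) := (conGen (rcRel op)).Quotient

/-- The canonical generator of the structure monoid associated with `s ∈ S`. -/
def smGen {S : Type*} (op : S → S → S) (s : S) : StructureMonoid op :=
  (conGen (rcRel op)).mk' (FreeMonoid.of s)

/-- The monomials `Ωₙ`: `OmegaFin op n x` is `Ω_{n+1}(x₀,…,xₙ)`, defined by `Ω₁(x₁) = x₁` and
`Ωₙ(x₁,…,xₙ) = Ω_{n−1}(x₁,…,x_{n−1}) ∘ Ω_{n−1}(x₁,…,x_{n−2},xₙ)`. -/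
def OmegaFin {S : Type*} (op : S → S → S) : (n : ℕ) → (Fin (n + 1) → S) → S
  | 0, x => x 0
  | n + 1, x =>
      op (OmegaFin op n fun i => x i.castSucc)
         (OmegaFin op n fun i => if (i : ℕ) = n then x (Fin.last (n + 1)) else x i.castSucc)

/-- `Πₙ(x₁,…,xₙ) = ι(Ω₁(x₁))·ι(Ω₂(x₁,x₂))·…·ι(Ωₙ(x₁,…,xₙ))`, computed in the monoid `M`. -/
def PiFin {S M : Type*} [Monoid M] (op : S → S → S) (ι : S → M) (n : ℕ) (x : Fin n → S) : M :=
  ((List.finRange n).map fun i =>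
    ι (OmegaFin op i.val fun j : Fin (i.val + 1) => x (Fin.castLE i.isLt j))).prod

theorem finRange_concat (n : ℕ) :
    List.finRange (n + 1) = ((List.finRange n).map Fin.castSucc) ++ [Fin.last n] := by
  apply List.ext_getElem
  · simp
  · intro i h1 h2
    simp only [List.getElem_finRange]
    rcases Nat.lt_or_ge i n with hi | hi
    · rw [List.getElem_append_left (by simpa using hi)]
      simp [List.getElem_finRange, Fin.ext_iff]
    · have : i = n := by simp at h1; omega
      subst this
      rw [List.getElem_append_right (by simp)]
      simp [Fin.ext_iff]

theorem PiFin_succ {S M : Type*} [Monoid M] (op : S → S → S) (ι : S → M) (n : ℕ)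
    (x : Fin (n + 1) → S) :
    PiFin op ι (n + 1) x = PiFin op ι n (fun i => x i.castSucc) * ι (OmegaFin op n x) := by
  unfold PiFin
  rw [finRange_concat, List.map_append, List.prod_append, List.map_map]
  congr 1
  simp only [List.map_cons, List.map_nil, List.prod_cons, List.prod_nil, mul_one]
  rfl

namespace S14


structure IS (M : Type*) [Monoid M] (S : Set M) where
  ν : (↥S →₀ ℕ) → M
  inj : Function.Injective ν
  surj : Function.Surjective ν
  map0 : ν 0 = 1
  mapS : ∀ s : ↥S, ν (Finsupp.single s 1) = s
  ranI : ∀ a, Set.range (fun s : ↥S => ν (a + Finsupp.single s 1)) =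
      Set.range fun s : ↥S => ν a * s

variable {M : Type*} [Monoid M] {S : Set M}

namespace IS

variable (h : IS M S)

theorem exists_right (a : ↥S →₀ ℕ) (s : ↥S) :
    ∃ u : ↥S, h.ν a * s = h.ν (a + Finsupp.single u 1) := by
  have : h.ν a * s ∈ Set.range fun s : ↥S => h.ν a * s := ⟨s, rfl⟩
  rw [← h.ranI] at this
  obtain ⟨u, hu⟩ := this
  exact ⟨u, hu.symm⟩

theorem exists_left (a : ↥S →₀ ℕ) (u : ↥S) :
    ∃ s : ↥S, h.ν (a + Finsupp.single u 1) = h.ν a * s := by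
  have : h.ν (a + Finsupp.single u 1) ∈
      Set.range fun s : ↥S => h.ν (a + Finsupp.single s 1) := ⟨u, rfl⟩
  rw [h.ranI] at this
  obtain ⟨s, hs⟩ := this
  exact ⟨s, hs.symm⟩

def wt (a : ↥S →₀ ℕ) : ℕ := a.sum fun _ n => n

theorem wt_add (a b : ↥S →₀ ℕ) : wt (a + b) = wt a + wt b :=
  Finsupp.sum_add_index' (fun _ => rfl) (fun _ _ _ => rfl)

@[simp] theorem wt_zero : wt (0 : ↥S →₀ ℕ) = 0 := by simp [wt]

@[simp] theorem wt_single (s : ↥S) (n : ℕ) : wt (Finsupp.single s n) = n := by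
  simp [wt, Finsupp.sum_single_index]

theorem wt_eq_zero {a : ↥S →₀ ℕ} (ha : wt a = 0) : a = 0 := by
  ext s
  by_contra hs
  have hmem : s ∈ a.support := Finsupp.mem_support_iff.2 (by simpa using hs)
  have h2 : a s ≤ a.sum fun _ n => n := Finset.single_le_sum (by intros; positivity) hmem
  have : a.sum (fun _ n => n) = 0 := ha
  simp at hs
  omega

theorem exists_decomp {a : ↥S →₀ ℕ} (ha : a ≠ 0) :
    ∃ (b : ↥S →₀ ℕ) (u : ↥S), a = b + Finsupp.single u 1 ∧ wt b + 1 = wt a := by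
  obtain ⟨u, hu⟩ := Finsupp.support_nonempty_iff.2 ha
  have hau : 1 ≤ a u := Nat.one_le_iff_ne_zero.2 (Finsupp.mem_support_iff.1 hu)
  have key : a - Finsupp.single u 1 + Finsupp.single u 1 = a := by
    ext v
    rcases eq_or_ne v u with rfl | hv
    · simp [Finsupp.tsub_apply]; omega
    · simp [Finsupp.tsub_apply, Finsupp.single_apply, Ne.symm hv]
  refine ⟨a - Finsupp.single u 1, u, key.symm, ?_⟩
  calc wt (a - Finsupp.single u 1) + 1
      = wt (a - Finsupp.single u 1 + Finsupp.single u 1) := by rw [wt_add, wt_single]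
    _ = wt a := by rw [key]

theorem exists_factor {a : ↥S →₀ ℕ} (ha : a ≠ 0) :
    ∃ (b : ↥S →₀ ℕ) (w : ↥S), h.ν a = h.ν b * w ∧ wt b + 1 = wt a := by
  obtain ⟨b, u, rfl, hwt⟩ := exists_decomp ha
  obtain ⟨w, hw⟩ := h.exists_left b u
  exact ⟨b, w, hw, hwt⟩

noncomputable def equiv : (↥S →₀ ℕ) ≃ M := Equiv.ofBijective h.ν ⟨h.inj, h.surj⟩

noncomputable def deg (x : M) : ℕ := wt (h.equiv.symm x)

theorem nu_deg (a : ↥S →₀ ℕ) : h.deg (h.ν a) = wt a := by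
  show wt (h.equiv.symm (h.equiv a)) = wt a
  rw [Equiv.symm_apply_apply]

theorem nu_symm (x : M) : h.ν (h.equiv.symm x) = x := h.equiv.apply_symm_apply x

theorem deg_mul_nu (x : M) : ∀ n (c : ↥S →₀ ℕ), wt c = n → h.deg (x * h.ν c) = h.deg x + wt c := by
  intro n
  induction n using Nat.strong_induction_on with
  | _ n ih =>
    intro c hc
    rcases eq_or_ne c 0 with rfl | hc0
    · simp [h.map0]
    · obtain ⟨b, w, hw, hwt⟩ := h.exists_factor hc0
      obtain ⟨p, hp⟩ := h.surj (x * h.ν b)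
      obtain ⟨q, hq⟩ := h.exists_right p w
      have h1 : x * h.ν c = h.ν (p + Finsupp.single q 1) := by
        rw [hw, ← mul_assoc, ← hp, hq]
      have h2 : h.deg (x * h.ν b) = h.deg x + wt b := ih (wt b) (by omega) b rfl
      rw [h1, h.nu_deg, wt_add, wt_single, ← hwt, ← Nat.add_assoc, ← h2, ← hp, h.nu_deg]

theorem deg_mul (x y : M) : h.deg (x * y) = h.deg x + h.deg y := by
  conv_lhs => rw [← h.nu_symm y]
  rw [h.deg_mul_nu x _ _ rfl]
  rfl

@[simp] theorem deg_one : h.deg (1 : M) = 0 := by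
  rw [← h.map0, h.nu_deg, wt_zero]

theorem deg_gen (s : ↥S) : h.deg (s : M) = 1 := by
  rw [← h.mapS s, h.nu_deg, wt_single]

theorem deg_zero_eq_one {x : M} (hx : h.deg x = 0) : x = 1 := by
  have := wt_eq_zero (a := h.equiv.symm x) hx
  have := congrArg h.ν this
  rwa [h.nu_symm, h.map0] at this

theorem prod_deg_one {l : List M} (hl : h.deg l.prod = 1) : ∃ t ∈ l, t = l.prod := by
  induction l with
  | nil => simp at hl
  | cons x r ihr =>
    rw [List.prod_cons, h.deg_mul] at hl
    rcases Nat.eq_zero_or_pos (h.deg x) with hx | hx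
    · have hx1 := h.deg_zero_eq_one hx
      subst hx1
      rw [List.prod_cons, one_mul]
      obtain ⟨t, ht, ht2⟩ := ihr (by omega)
      exact ⟨t, List.mem_cons_of_mem _ ht, ht2⟩
    · have : h.deg r.prod = 0 := by omega
      have := h.deg_zero_eq_one this
      refine ⟨x, List.mem_cons_self, ?_⟩
      rw [List.prod_cons, this, mul_one]

include h in
theorem finite [Monoid.FG M] : S.Finite := by
  obtain ⟨T, hT⟩ := Monoid.FG.fg_top (M := M)
  apply Set.Finite.subset T.finite_toSet
  intro s hs
  have : s ∈ Submonoid.closure (T : Set M) := by rw [hT]; trivial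
  obtain ⟨l, hl, hprod⟩ := Submonoid.exists_list_of_mem_closure this
  have hdeg : h.deg l.prod = 1 := by rw [hprod]; exact h.deg_gen ⟨s, hs⟩
  obtain ⟨t, ht, ht2⟩ := h.prod_deg_one hdeg
  rw [← hprod, ← ht2]
  exact hl t ht


section fin
variable [Finite ↥S]

noncomputable def tfun (b : ↥S →₀ ℕ) (s : ↥S) : ↥S := (h.exists_right b s).choose

theorem tfun_spec (b : ↥S →₀ ℕ) (s : ↥S) :
    h.ν b * s = h.ν (b + Finsupp.single (h.tfun b s) 1) :=
  (h.exists_right b s).choose_spec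

theorem tfun_surjective (b : ↥S →₀ ℕ) : Function.Surjective (h.tfun b) := by
  intro u
  obtain ⟨s, hs⟩ := h.exists_left b u
  refine ⟨s, ?_⟩
  have h1 := hs.trans (h.tfun_spec b s)
  have h2 := h.inj h1
  have h3 := add_left_cancel h2
  exact (Finsupp.single_left_injective one_ne_zero h3).symm

theorem tfun_bijective (b : ↥S →₀ ℕ) : Function.Bijective (h.tfun b) :=
  ⟨(Finite.injective_iff_surjective).2 (h.tfun_surjective b), h.tfun_surjective b⟩

noncomputable def tau (b : ↥S →₀ ℕ) : ↥S ≃ ↥S :=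
  Equiv.ofBijective (h.tfun b) (h.tfun_bijective b)

theorem tau_spec (b : ↥S →₀ ℕ) (s : ↥S) :
    h.ν b * s = h.ν (b + Finsupp.single (h.tau b s) 1) := h.tfun_spec b s

theorem nu_add_single (b : ↥S →₀ ℕ) (u : ↥S) :
    h.ν (b + Finsupp.single u 1) = h.ν b * ((h.tau b).symm u) := by
  conv_lhs => rw [show u = h.tau b ((h.tau b).symm u) from ((h.tau b).apply_symm_apply u).symm]
  exact (h.tau_spec b _).symm

@[simp] theorem tau_zero (s : ↥S) : h.tau 0 s = s := by
  have := h.tau_spec 0 s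
  rw [h.map0, one_mul, ← h.mapS s, zero_add] at this
  have := h.inj this.symm
  exact (Finsupp.single_left_injective one_ne_zero this)

/-- the binary operation of the RC-quasigroup -/
noncomputable def op (s t : ↥S) : ↥S := (h.tau (Finsupp.single s 1)).symm t

theorem mul_op (s t : ↥S) :
    (s : M) * (h.op s t : M) = h.ν (Finsupp.single s 1 + Finsupp.single t 1) := by
  rw [← h.mapS s, op, ← nu_add_single]

theorem mul_op_comm (s t : ↥S) :
    (s : M) * (h.op s t : M) = (t : M) * (h.op t s : M) := by
  rw [mul_op, mul_op, add_comm]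

theorem tau_op_self (s t : ↥S) : h.tau (Finsupp.single s 1) (h.op s t) = t :=
  (h.tau (Finsupp.single s 1)).apply_symm_apply t

/-- The master exchange identity. -/
theorem master (b : ↥S →₀ ℕ) (u v : ↥S) :
    h.tau (b + Finsupp.single (h.tau b u) 1) (h.op u v) = h.tau b v := by
  have key : ∀ u v : ↥S, u ≠ v →
      h.tau (b + Finsupp.single (h.tau b u) 1) (h.op u v) = h.tau b v := by
    intro u v huv
    have e1 : h.ν b * ((u : M) * (h.op u v : M)) =
        h.ν (b + Finsupp.single (h.tau b u) 1 +
          Finsupp.single (h.tau (b + Finsupp.single (h.tau b u) 1) (h.op u v)) 1) := by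
      rw [← mul_assoc, h.tau_spec b u, h.tau_spec]
    have e2 : h.ν b * ((v : M) * (h.op v u : M)) =
        h.ν (b + Finsupp.single (h.tau b v) 1 +
          Finsupp.single (h.tau (b + Finsupp.single (h.tau b v) 1) (h.op v u)) 1) := by
      rw [← mul_assoc, h.tau_spec b v, h.tau_spec]
    rw [h.mul_op_comm u v, e2] at e1
    have heq := h.inj e1
    set A := h.tau (b + Finsupp.single (h.tau b u) 1) (h.op u v) with hA
    set c := h.tau b v with hc
    have hne : h.tau b u ≠ c := fun hh => huv ((h.tau b).injective hh)
    have hval := DFunLike.congr_fun heq c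
    by_contra hAc
    rw [Finsupp.add_apply, Finsupp.add_apply, Finsupp.add_apply, Finsupp.add_apply,
      Finsupp.single_eq_same, Finsupp.single_eq_of_ne' hne, Finsupp.single_eq_of_ne' hAc] at hval
    omega
  rcases eq_or_ne u v with rfl | huv
  · -- diagonal case by bijectivity
    set f : ↥S → ↥S := fun v => h.tau (b + Finsupp.single (h.tau b u) 1) (h.op u v) with hf
    have hfinj : Function.Injective f :=
      (h.tau _).injective.comp (h.tau (Finsupp.single u 1)).symm.injective
    have hfsurj : Function.Surjective f := Finite.injective_iff_surjective.1 hfinj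
    by_contra hne
    obtain ⟨w, hw⟩ := hfsurj (h.tau b u)
    have hwu : w ≠ u := by
      intro hh; subst hh; exact hne hw
    have : f w = h.tau b w := key u w (Ne.symm hwu)
    rw [hw] at this
    exact hwu ((h.tau b).injective this.symm)
  · exact key u v huv

theorem op_bijective (s : ↥S) : Function.Bijective (h.op s) :=
  (h.tau (Finsupp.single s 1)).symm.bijective

theorem op_op (x y z : ↥S) :
    h.op (h.op x y) (h.op x z) =
      (h.tau (Finsupp.single x 1 + Finsupp.single y 1)).symm z := by
  have := h.master (Finsupp.single x 1) (h.op x y) (h.op x z)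
  rw [h.tau_op_self, h.tau_op_self] at this
  exact (Equiv.eq_symm_apply _).mpr this

theorem rc_law : ∀ x y z : ↥S,
    h.op (h.op x y) (h.op x z) = h.op (h.op y x) (h.op y z) := by
  intro x y z
  rw [h.op_op, h.op_op, add_comm]


theorem tau_zero_symm (z : ↥S) : (h.tau 0).symm z = z := by
  have := h.tau_zero ((h.tau 0).symm z)
  rw [Equiv.apply_symm_apply] at this
  exact this.symm

theorem omega_eq (n : ℕ) (x : Fin (n + 1) → ↥S) :
    OmegaFin h.op n x =
      (h.tau (∑ i : Fin n, Finsupp.single (x i.castSucc) 1)).symm (x (Fin.last n)) := by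
  induction n with
  | zero =>
    show x 0 = _
    rw [Finset.univ_eq_empty, Finset.sum_empty, h.tau_zero_symm]
    rfl
  | succ n ih =>
    have e1 : OmegaFin h.op (n+1) x = h.op (OmegaFin h.op n fun i => x i.castSucc)
        (OmegaFin h.op n fun i => if (i : ℕ) = n then x (Fin.last (n + 1)) else x i.castSucc) := rfl
    rw [e1, ih, ih]
    have hb : (∑ i : Fin n, Finsupp.single
          (if ((i.castSucc : Fin (n+1)) : ℕ) = n then x (Fin.last (n + 1))
            else x i.castSucc.castSucc) 1)
        = ∑ i : Fin n, Finsupp.single (x i.castSucc.castSucc) 1 := by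
      apply Finset.sum_congr rfl
      intro i _
      have hne : ((i.castSucc : Fin (n+1)) : ℕ) ≠ n := by
        rw [Fin.coe_castSucc]; exact i.isLt.ne
      rw [if_neg hne]
    have hif : (if ((Fin.last n : Fin (n+1)) : ℕ) = n then x (Fin.last (n + 1))
        else x (Fin.last n).castSucc) = x (Fin.last (n + 1)) := if_pos (Fin.val_last n)
    rw [hb, hif]
    have hm := h.master (∑ i : Fin n, Finsupp.single (x i.castSucc.castSucc) 1)
      ((h.tau (∑ i : Fin n, Finsupp.single (x i.castSucc.castSucc) 1)).symm
        (x (Fin.last n).castSucc))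
      ((h.tau (∑ i : Fin n, Finsupp.single (x i.castSucc.castSucc) 1)).symm
        (x (Fin.last (n+1))))
    rw [Equiv.apply_symm_apply, Equiv.apply_symm_apply] at hm
    rw [(Equiv.eq_symm_apply _).mpr hm, Fin.sum_univ_castSucc]

theorem nu_pi_aux (n : ℕ) (x : Fin n → ↥S) :
    h.ν (∑ i : Fin n, Finsupp.single (x i) 1) =
      PiFin h.op (fun s : ↥S => (s : M)) n x := by
  induction n with
  | zero =>
    rw [Finset.univ_eq_empty, Finset.sum_empty, h.map0]
    simp [PiFin]
  | succ n ih =>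
    rw [Fin.sum_univ_castSucc, h.nu_add_single, PiFin_succ, ih, h.omega_eq]

theorem nu_list (l : List ↥S) :
    h.ν ((l.map fun s => Finsupp.single s 1).sum) =
      PiFin h.op (fun s : ↥S => (s : M)) l.length l.get := by
  have : (l.map fun s => Finsupp.single s (1:ℕ)).sum = ∑ i : Fin l.length, Finsupp.single (l.get i) 1 := by
    induction l with
    | nil => simp
    | cons a r ihr =>
      rw [List.map_cons, List.sum_cons, ihr]
      show _ = ∑ i : Fin (r.length + 1), Finsupp.single ((a :: r).get i) 1
      rw [Fin.sum_univ_succ]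
      rfl
  rw [this, h.nu_pi_aux]

/-- fold of a word on a base point -/
noncomputable def F (hh : IS M S) [Finite ↥S] : (↥S →₀ ℕ) → List ↥S → (↥S →₀ ℕ)
  | b, [] => b
  | b, s :: l => F hh (b + Finsupp.single (hh.tau b s) 1) l

@[simp] theorem F_nil (b : ↥S →₀ ℕ) : h.F b [] = b := rfl

theorem F_cons (b : ↥S →₀ ℕ) (s : ↥S) (l : List ↥S) :
    h.F b (s :: l) = h.F (b + Finsupp.single (h.tau b s) 1) l := rfl

/-- the product of a word in M -/
def phi0 (_hh : IS M S) : FreeMonoid ↥S →* M := FreeMonoid.lift fun s : ↥S => (s : M)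

theorem nu_F : ∀ (l : List ↥S) (b : ↥S →₀ ℕ),
    h.ν (h.F b l) = h.ν b * h.phi0 (FreeMonoid.ofList l) := by
  intro l
  induction l with
  | nil => intro b; simp [phi0, FreeMonoid.lift_apply]
  | cons s r ih =>
    intro b
    rw [F_cons, ih, ← h.tau_spec b s]
    have : h.phi0 (FreeMonoid.ofList (s :: r)) = (s : M) * h.phi0 (FreeMonoid.ofList r) := by
      show h.phi0 (FreeMonoid.of s * FreeMonoid.ofList r) = _
      rw [map_mul, phi0, FreeMonoid.lift_eval_of]
    rw [this, mul_assoc]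

theorem F_le (l : List ↥S) : ∀ (b : ↥S →₀ ℕ), b ≤ h.F b l := by
  induction l with
  | nil => intro b; simp
  | cons s r ih =>
    intro b
    rw [F_cons]
    exact le_trans (le_add_of_nonneg_right zero_le) (ih _)

theorem wt_F (l : List ↥S) : ∀ (b : ↥S →₀ ℕ), wt (h.F b l) = wt b + l.length := by
  induction l with
  | nil => intro b; simp
  | cons s r ih =>
    intro b
    rw [F_cons, ih, wt_add, wt_single, List.length_cons]
    omega

theorem rc_le_ker : conGen (rcRel h.op) ≤ Con.ker h.phi0 := by
  apply Con.conGen_le.mpr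
  rintro x y ⟨s, t, hst, rfl, rfl⟩
  show h.phi0 _ = h.phi0 _
  rw [map_mul, map_mul, phi0, FreeMonoid.lift_eval_of, FreeMonoid.lift_eval_of,
    FreeMonoid.lift_eval_of, FreeMonoid.lift_eval_of]
  exact h.mul_op_comm s t

theorem congr_F_eq {w w' : FreeMonoid ↥S} (hw : (conGen (rcRel h.op)) w w') (b : ↥S →₀ ℕ) :
    h.F b (FreeMonoid.toList w) = h.F b (FreeMonoid.toList w') := by
  have hphi : h.phi0 w = h.phi0 w' := h.rc_le_ker hw
  apply h.inj
  rw [h.nu_F, h.nu_F]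
  show h.ν b * h.phi0 w = h.ν b * h.phi0 w'
  rw [hphi]

theorem exchange : ∀ (l : List ↥S) (b : ↥S →₀ ℕ) (t : ↥S),
    b (h.tau b t) < (h.F b l) (h.tau b t) →
    ∃ l', (conGen (rcRel h.op)) (FreeMonoid.ofList l)
      (FreeMonoid.of t * FreeMonoid.ofList l') := by
  intro l
  induction l with
  | nil =>
    intro b t hlt
    rw [F_nil] at hlt
    exact absurd hlt (lt_irrefl _)
  | cons t' r ih =>
    intro b t hlt
    rcases eq_or_ne t' t with rfl | htt
    · exact ⟨r, (conGen (rcRel h.op)).refl _⟩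
    · have hne : h.tau b t' ≠ h.tau b t := fun hh => htt ((h.tau b).injective hh)
      set c := h.tau b t with hc
      set b' := b + Finsupp.single (h.tau b t') 1 with hb'
      have hb'c : b' c = b c := by
        rw [hb', Finsupp.add_apply, Finsupp.single_eq_of_ne' hne, add_zero]
      set u := (h.tau b').symm c with hu
      have htu : h.tau b' u = c := (h.tau b').apply_symm_apply c
      have hcond : b' (h.tau b' u) < (h.F b' r) (h.tau b' u) := by
        rw [htu, hb'c]
        rw [F_cons] at hlt
        exact hlt
      obtain ⟨r', hr'⟩ := ih b' u hcond
      -- u = op t' t by the master identity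
      have hmaster := h.master b t' t
      rw [← hb', ← hc] at hmaster
      have huop : u = h.op t' t := by
        rw [hu, ← hmaster, Equiv.symm_apply_apply]
      -- assemble
      have step1 : (conGen (rcRel h.op)) (FreeMonoid.ofList (t' :: r))
          (FreeMonoid.of t' * (FreeMonoid.of u * FreeMonoid.ofList r')) :=
        ((conGen (rcRel h.op)).mul ((conGen (rcRel h.op)).refl (FreeMonoid.of t')) hr')
      have hrel : (conGen (rcRel h.op)) (FreeMonoid.of t' * FreeMonoid.of u)
          (FreeMonoid.of t * FreeMonoid.of (h.op t t')) := by
        apply ConGen.Rel.of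
        exact ⟨t', t, htt, by rw [huop], rfl⟩
      have step2 : (conGen (rcRel h.op))
          (FreeMonoid.of t' * FreeMonoid.of u * FreeMonoid.ofList r')
          (FreeMonoid.of t * FreeMonoid.of (h.op t t') * FreeMonoid.ofList r') :=
        (conGen (rcRel h.op)).mul hrel ((conGen (rcRel h.op)).refl _)
      refine ⟨h.op t t' :: r', ?_⟩
      have e3 : FreeMonoid.of t * FreeMonoid.of (h.op t t') * FreeMonoid.ofList r'
          = FreeMonoid.of t * FreeMonoid.ofList (h.op t t' :: r') := by
        rw [mul_assoc]; rfl
      have e4 : FreeMonoid.of t' * (FreeMonoid.of u * FreeMonoid.ofList r')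
          = FreeMonoid.of t' * FreeMonoid.of u * FreeMonoid.ofList r' := (mul_assoc _ _ _).symm
      rw [e4] at step1
      rw [e3] at step2
      exact (conGen (rcRel h.op)).trans step1 step2

theorem main_congr : ∀ (l l' : List ↥S) (b : ↥S →₀ ℕ), h.F b l = h.F b l' →
    (conGen (rcRel h.op)) (FreeMonoid.ofList l) (FreeMonoid.ofList l') := by
  intro l
  induction l with
  | nil =>
    intro l' b hF
    have : wt (h.F b []) = wt (h.F b l') := by rw [hF]
    rw [h.wt_F, h.wt_F] at this
    simp at this
    subst this
    exact (conGen (rcRel h.op)).refl _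
  | cons t r ih =>
    intro l' b hF
    have hlt : b (h.tau b t) < (h.F b l') (h.tau b t) := by
      rw [← hF, F_cons]
      have hle := h.F_le r (b + Finsupp.single (h.tau b t) 1)
      have := hle (h.tau b t)
      rw [Finsupp.add_apply, Finsupp.single_eq_same] at this
      omega
    obtain ⟨r'', hr''⟩ := h.exchange l' b t hlt
    have hFeq : h.F b l' = h.F b (t :: r'') := by
      have := h.congr_F_eq hr'' b
      simpa using this
    rw [hFeq, F_cons, F_cons] at hF
    have hC := ih r'' _ hF
    have : (conGen (rcRel h.op)) (FreeMonoid.ofList (t :: r))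
        (FreeMonoid.of t * FreeMonoid.ofList r'') :=
      (conGen (rcRel h.op)).mul ((conGen (rcRel h.op)).refl (FreeMonoid.of t)) hC
    exact (conGen (rcRel h.op)).trans this ((conGen (rcRel h.op)).symm hr'')

theorem phi_bijective (hgen : Submonoid.closure S = ⊤) :
    Function.Bijective ((conGen (rcRel h.op)).lift h.phi0 h.rc_le_ker) := by
  constructor
  · intro a b hab
    induction a using Con.induction_on with
    | _ w =>
    induction b using Con.induction_on with
    | _ w' =>
    rw [Con.lift_coe, Con.lift_coe] at hab
    have hF : h.F 0 (FreeMonoid.toList w) = h.F 0 (FreeMonoid.toList w') := by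
      apply h.inj
      rw [h.nu_F, h.nu_F, h.map0, one_mul, one_mul]
      show h.phi0 w = h.phi0 w'
      exact hab
    have := h.main_congr (FreeMonoid.toList w) (FreeMonoid.toList w') 0 hF
    have hrel : (conGen (rcRel h.op)) w w' := this
    exact (Con.eq _).mpr hrel
  · intro m
    have hm : m ∈ Submonoid.closure S := by rw [hgen]; trivial
    induction hm using Submonoid.closure_induction with
    | mem x hx =>
      refine ⟨(conGen (rcRel h.op)).mk' (FreeMonoid.of ⟨x, hx⟩), ?_⟩
      show h.phi0 (FreeMonoid.of (⟨x, hx⟩ : ↥S)) = x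
      exact FreeMonoid.lift_eval_of _ _
    | one => exact ⟨1, map_one _⟩
    | mul x y _ _ ihx ihy =>
      obtain ⟨a, ha⟩ := ihx
      obtain ⟨b, hb⟩ := ihy
      exact ⟨a * b, by rw [map_mul, ha, hb]⟩

/-- the monoid isomorphism with the structure monoid -/
noncomputable def mEquiv (hgen : Submonoid.closure S = ⊤) : StructureMonoid h.op ≃* M :=
  MulEquiv.ofBijective _ (h.phi_bijective hgen)

theorem mEquiv_gen (hgen : Submonoid.closure S = ⊤) (s : ↥S) :
    h.mEquiv hgen (smGen h.op s) = (s : M) := by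
  show ((conGen (rcRel h.op)).lift h.phi0 h.rc_le_ker) ((conGen (rcRel h.op)).mk' (FreeMonoid.of s)) = _
  rw [Con.lift_mk']
  exact FreeMonoid.lift_eval_of _ _

theorem op_unique (op' : ↥S → ↥S → ↥S) (hinj' : ∀ s : ↥S, Function.Injective (op' s))
    (hrel : ∀ s t : ↥S, s ≠ t → (s : M) * (op' s t : M) = (t : M) * (op' t s : M)) :
    op' = h.op := by
  have hoff : ∀ s t : ↥S, s ≠ t → op' s t = h.op s t := by
    intro s t hst
    have e1 : (s : M) * (op' s t : M) =
        h.ν (Finsupp.single s 1 + Finsupp.single (h.tau (Finsupp.single s 1) (op' s t)) 1) := by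
      rw [← h.mapS s]; exact h.tau_spec _ _
    have e2 : (t : M) * (op' t s : M) =
        h.ν (Finsupp.single t 1 + Finsupp.single (h.tau (Finsupp.single t 1) (op' t s)) 1) := by
      rw [← h.mapS t]; exact h.tau_spec _ _
    have heq := h.inj ((e1.symm.trans (hrel s t hst)).trans e2)
    have hval := DFunLike.congr_fun heq t
    rw [Finsupp.add_apply, Finsupp.add_apply, Finsupp.single_eq_same,
      Finsupp.single_eq_of_ne' hst] at hval
    have hp : h.tau (Finsupp.single s 1) (op' s t) = t := by
      by_contra hne
      rw [Finsupp.single_eq_of_ne' hne] at hval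
      omega
    have : op' s t = (h.tau (Finsupp.single s 1)).symm t := by
      conv_rhs => rw [← hp]
      rw [Equiv.symm_apply_apply]
    exact this
  funext s x
  rcases eq_or_ne x s with rfl | hxs
  · by_contra hne
    obtain ⟨w, hw⟩ := (h.op_bijective x).2 (op' x x)
    have hwx : w ≠ x := by
      intro hh; subst hh; exact hne hw.symm
    have h1 : op' x w = h.op x w := hoff x w hwx.symm
    rw [hw] at h1
    exact hwx (hinj' x h1)
  · exact hoff s x (Ne.symm hxs)

theorem exists_list_sum : ∀ (n : ℕ) (a : ↥S →₀ ℕ), wt a = n →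
    ∃ l : List ↥S, (l.map fun s => Finsupp.single s 1).sum = a := by
  intro n
  induction n using Nat.strong_induction_on with
  | _ n ih =>
    intro a ha
    rcases eq_or_ne a 0 with rfl | ha0
    · exact ⟨[], rfl⟩
    · obtain ⟨b, u, rfl, hwt⟩ := exists_decomp ha0
      obtain ⟨l, hl⟩ := ih (wt b) (by omega) b rfl
      refine ⟨l ++ [u], ?_⟩
      rw [List.map_append, List.sum_append, hl]
      simp

theorem nu_dvd_add : ∀ (n : ℕ) (c : ↥S →₀ ℕ), wt c = n → ∀ b, h.ν b ∣ h.ν (b + c) := by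
  intro n
  induction n using Nat.strong_induction_on with
  | _ n ih =>
    intro c hc b
    rcases eq_or_ne c 0 with rfl | hc0
    · rw [add_zero]
    · obtain ⟨c', u, rfl, hwt⟩ := exists_decomp hc0
      obtain ⟨w, hw⟩ := h.exists_left (b + c') u
      rw [← add_assoc, hw]
      exact Dvd.dvd.mul_right (ih (wt c') (by omega) c' rfl b) _

theorem nu_dvd_of_le {b a : ↥S →₀ ℕ} (hba : b ≤ a) : h.ν b ∣ h.ν a := by
  obtain ⟨c, rfl⟩ := exists_add_of_le hba
  exact h.nu_dvd_add (wt c) c rfl b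

theorem gen_mul_nu (s : ↥S) : ∀ (n : ℕ) (c : ↥S →₀ ℕ), wt c = n →
    ∃ d, (s : M) * h.ν c = h.ν (Finsupp.single s 1 + d) := by
  intro n
  induction n using Nat.strong_induction_on with
  | _ n ih =>
    intro c hc
    rcases eq_or_ne c 0 with rfl | hc0
    · exact ⟨0, by rw [h.map0, mul_one, add_zero, h.mapS]⟩
    · obtain ⟨c', u, rfl, hwt⟩ := exists_decomp hc0
      obtain ⟨w, hw⟩ := h.exists_left c' u
      obtain ⟨d', hd'⟩ := ih (wt c') (by omega) c' rfl
      refine ⟨d' + Finsupp.single (h.tau (Finsupp.single s 1 + d') w) 1, ?_⟩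
      rw [hw, ← mul_assoc, hd', h.tau_spec, add_assoc]

end fin

end IS
end S14


/-- If `M` is a finitely generated monoid with a right `I`-structure `ν`
based on `S ⊆ M`, then `S` is finite and there is a unique binary operation `∘` on `S` making
`(S,∘)` an RC-quasigroup with `M` (isomorphic to) its structure monoid; moreover the
`I`-structure is unique and given by `ν(s₁⋯sₙ) = Πₙ(s₁,…,sₙ)`, and for `s ≠ t` the element
`s·(s∘t)` is the right-lcm of `s` and `t` in `M` (i.e. `s∘t` is the right-complement `s∖t`). -/
theorem statement14 {M : Type*} [Monoid M] [Monoid.FG M] (S : Set M)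
    (hgen : Submonoid.closure S = ⊤)
    (ν : (↥S →₀ ℕ) → M)
    (hbij : Function.Bijective ν)
    (hν0 : ν 0 = 1)
    (hνS : ∀ s : ↥S, ν (Finsupp.single s 1) = (s : M))
    (hI : ∀ a : ↥S →₀ ℕ,
      Set.range (fun s : ↥S => ν (a + Finsupp.single s 1)) =
        Set.range fun s : ↥S => ν a * (s : M)) :
    S.Finite ∧
    ∃ op : ↥S → ↥S → ↥S,
      (RCLaw op ∧ ∀ s : ↥S, Function.Bijective (op s)) ∧
      (∃ e : StructureMonoid op ≃* M, ∀ s : ↥S, e (smGen op s) = (s : M)) ∧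
      (∀ op' : ↥S → ↥S → ↥S,
        (RCLaw op' ∧ ∀ s : ↥S, Function.Bijective (op' s)) →
        (∃ e : StructureMonoid op' ≃* M, ∀ s : ↥S, e (smGen op' s) = (s : M)) →
        op' = op) ∧
      (∀ ν' : (↥S →₀ ℕ) → M,
        Function.Bijective ν' → ν' 0 = 1 → (∀ s : ↥S, ν' (Finsupp.single s 1) = (s : M)) →
        (∀ a : ↥S →₀ ℕ,
          Set.range (fun s : ↥S => ν' (a + Finsupp.single s 1)) =
            Set.range fun s : ↥S => ν' a * (s : M)) →
        ν' = ν) ∧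
      (∀ l : List ↥S,
        ν ((l.map fun s => Finsupp.single s 1).sum) =
          PiFin op (fun s : ↥S => (s : M)) l.length l.get) ∧
      (∀ s t : ↥S, s ≠ t →
        ((s : M) ∣ (s : M) * (op s t : M)) ∧
        ((t : M) ∣ (s : M) * (op s t : M)) ∧
        (∀ k : M, (s : M) ∣ k → (t : M) ∣ k → (s : M) * (op s t : M) ∣ k)) := by
  classical
  let h : S14.IS M S := ⟨ν, hbij.1, hbij.2, hν0, hνS, hI⟩
  have hνh : h.ν = ν := rfl
  have hfin : S.Finite := h.finite
  haveI : Finite ↥S := hfin.to_subtype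
  refine ⟨hfin, h.op, ⟨h.rc_law, h.op_bijective⟩, ⟨h.mEquiv hgen, h.mEquiv_gen hgen⟩, ?_, ?_, ?_, ?_⟩
  · -- uniqueness of the operation
    rintro op' ⟨_hRC', hbij'⟩ ⟨e', he'⟩
    apply h.op_unique op' (fun s => (hbij' s).1)
    intro s t hst
    have hq : smGen op' s * smGen op' (op' s t) = smGen op' t * smGen op' (op' t s) := by
      show (conGen (rcRel op')).mk' (FreeMonoid.of s) *
          (conGen (rcRel op')).mk' (FreeMonoid.of (op' s t)) =
          (conGen (rcRel op')).mk' (FreeMonoid.of t) *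
          (conGen (rcRel op')).mk' (FreeMonoid.of (op' t s))
      rw [← map_mul, ← map_mul]
      exact (Con.eq _).mpr (ConGen.Rel.of _ _ ⟨s, t, hst, rfl, rfl⟩)
    have hq2 := congrArg e' hq
    rw [map_mul, map_mul, he', he', he', he'] at hq2
    exact hq2
  · -- uniqueness of the I-structure
    intro ν' hbij' h0' hS' hI'
    let h' : S14.IS M S := ⟨ν', hbij'.1, hbij'.2, h0', hS', hI'⟩
    have hop : h'.op = h.op := by
      apply h.op_unique h'.op (fun s => (h'.op_bijective s).1)
      intro s t hst
      exact h'.mul_op_comm s t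
    funext a
    obtain ⟨l, hl⟩ := S14.IS.exists_list_sum (S := S) (S14.IS.wt a) a rfl
    rw [← hl]
    show h'.ν _ = h.ν _
    rw [h'.nu_list l, h.nu_list l, hop]
  · -- the Pi formula
    intro l
    exact h.nu_list l
  · -- right lcm
    intro s t hst
    refine ⟨⟨(h.op s t : M), rfl⟩, ⟨(h.op t s : M), h.mul_op_comm s t⟩, ?_⟩
    intro k hsk htk
    obtain ⟨m, hm⟩ := hsk
    obtain ⟨m', hm'⟩ := htk
    obtain ⟨c, rfl⟩ := h.surj m
    obtain ⟨c', rfl⟩ := h.surj m'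
    obtain ⟨d, hd⟩ := h.gen_mul_nu s (S14.IS.wt c) c rfl
    obtain ⟨d', hd'⟩ := h.gen_mul_nu t (S14.IS.wt c') c' rfl
    have hk1 : k = h.ν (Finsupp.single s 1 + d) := by rw [hm, hd]
    have hk2 : k = h.ν (Finsupp.single t 1 + d') := by rw [hm', hd']
    have heq : Finsupp.single s 1 + d = Finsupp.single t 1 + d' := h.inj (hk1.symm.trans hk2)
    have hdt : 1 ≤ d t := by
      have hval := DFunLike.congr_fun heq t
      rw [Finsupp.add_apply, Finsupp.add_apply, Finsupp.single_eq_same,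
        Finsupp.single_eq_of_ne' hst] at hval
      omega
    have hle : Finsupp.single s 1 + Finsupp.single t 1 ≤ Finsupp.single s 1 + d := by
      rw [Finsupp.le_def]
      intro v
      rw [Finsupp.add_apply, Finsupp.add_apply]
      rcases eq_or_ne t v with rfl | hvt
      · rw [Finsupp.single_eq_same]
        omega
      · rw [Finsupp.single_eq_of_ne' hvt]
        omega
    have hdvd : h.ν (Finsupp.single s 1 + Finsupp.single t 1) ∣ k := by
      rw [hk1]
      exact h.nu_dvd_of_le hle
    rwa [← h.mul_op s t] at hdvd
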